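/- The sequence e_N = tr(E_N) (trace of the top-left block of Q_N^{(g)}) satisfies the linear recurrence e_{N+1} = (a00^00 + a11^11) e_N + (a01^01 a10^10 − a00^00 a11^11) e_{N-1} for N ≥ 2, with e_1 = 1 and e_2 = a00^00 + a01^01. -/
import Mathlib


open Matrix Kronecker

/-- Configuration space of `N` sites, each holding a state in `{0,1}`. -/
abbrev Conf (N : ℕ) := Fin N → Fin 2

/-- `Fin 2 × Conf N ≃ Conf (N+1)` by prepending the first bit. -/
def confEquiv (N : ℕ) : Fin 2 × Conf N ≃ Conf (N + 1) :=
  Fin.consEquiv (fun _ => Fin 2)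

/-- `(Fin 2 × Fin 2) × Conf N ≃ Conf (N+2)` by prepending the first two bits. -/
def confEquiv2 (N : ℕ) : (Fin 2 × Fin 2) × Conf N ≃ Conf (N + 2) :=
  (((Equiv.prodAssoc (Fin 2) (Fin 2) (Conf N)).trans
    ((Equiv.refl (Fin 2)).prodCongr (confEquiv N))).trans (confEquiv (N + 1)))

/-- The global operator `Q_N^{(g)}`, defined by `Q_1 = I_2` and
`Q_{N+1} = (I_2 ⊗ Q_N) (Q^{(l)} ⊗ I_{2^{N-1}})`. -/
def Qg {R : Type*} [CommRing R] (Ql : Matrix (Fin 2 × Fin 2) (Fin 2 × Fin 2) R) :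
    (N : ℕ) → Matrix (Conf N) (Conf N) R
  | 0 => 1
  | 1 => 1
  | (N + 2) =>
      (Matrix.reindex (confEquiv (N + 1)) (confEquiv (N + 1))
          ((1 : Matrix (Fin 2) (Fin 2) R) ⊗ₖ Qg Ql (N + 1))) *
      (Matrix.reindex (confEquiv2 N) (confEquiv2 N)
          (Ql ⊗ₖ (1 : Matrix (Conf N) (Conf N) R)))

/-- Top-left block `E`. -/
def blockTL {R : Type*} [CommRing R] {N : ℕ}
    (M : Matrix (Conf (N + 1)) (Conf (N + 1)) R) : Matrix (Conf N) (Conf N) R :=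
  Matrix.of fun x y => M (Fin.cons 0 x) (Fin.cons 0 y)

/-- Top-right block `F`. -/
def blockTR {R : Type*} [CommRing R] {N : ℕ}
    (M : Matrix (Conf (N + 1)) (Conf (N + 1)) R) : Matrix (Conf N) (Conf N) R :=
  Matrix.of fun x y => M (Fin.cons 0 x) (Fin.cons 1 y)

/-- Bottom-left block `G`. -/
def blockBL {R : Type*} [CommRing R] {N : ℕ}
    (M : Matrix (Conf (N + 1)) (Conf (N + 1)) R) : Matrix (Conf N) (Conf N) R :=
  Matrix.of fun x y => M (Fin.cons 1 x) (Fin.cons 0 y)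

/-- Bottom-right block `H`. -/
def blockBR {R : Type*} [CommRing R] {N : ℕ}
    (M : Matrix (Conf (N + 1)) (Conf (N + 1)) R) : Matrix (Conf N) (Conf N) R :=
  Matrix.of fun x y => M (Fin.cons 1 x) (Fin.cons 1 y)


/-- The sequence `e_N = tr E_N`, with the convention `e_0 = 1`. -/
noncomputable def trE (Ql : Matrix (Fin 2 × Fin 2) (Fin 2 × Fin 2) ℂ) : ℕ → ℂ
  | 0 => 1
  | (N + 1) => Matrix.trace (blockTL (Qg Ql (N + 1)))


lemma confEquiv_symm_aux (N : ℕ) (m : Fin 2) (z : Conf N) :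
    (confEquiv N).symm (Fin.cons m z) = (m, z) := by
  rw [Equiv.symm_apply_eq]; rfl

lemma confEquiv2_symm_aux (N : ℕ) (m n : Fin 2) (z : Conf N) :
    (confEquiv2 N).symm (Fin.cons m (Fin.cons n z)) = ((m, n), z) := by
  rw [Equiv.symm_apply_eq]; rfl

lemma Qg_entry (Ql : Matrix (Fin 2 × Fin 2) (Fin 2 × Fin 2) ℂ)
    (hvan : ∀ i j k l : Fin 2, j ≠ l → Ql (k, l) (i, j) = 0)
    (N : ℕ) (k l i j : Fin 2) (x y : Conf N) :
    Qg Ql (N + 2) (Fin.cons k (Fin.cons l x)) (Fin.cons i (Fin.cons j y)) =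
      Qg Ql (N + 1) (Fin.cons l x) (Fin.cons j y) * Ql (k, j) (i, j) := by
  show ((Matrix.reindex (confEquiv (N + 1)) (confEquiv (N + 1))
          ((1 : Matrix (Fin 2) (Fin 2) ℂ) ⊗ₖ Qg Ql (N + 1))) *
      (Matrix.reindex (confEquiv2 N) (confEquiv2 N)
          (Ql ⊗ₖ (1 : Matrix (Conf N) (Conf N) ℂ)))) _ _ = _
  rw [Matrix.mul_apply, ← Equiv.sum_comp (confEquiv2 N)]
  rw [Fintype.sum_prod_type, Fintype.sum_prod_type]
  have key : ∀ (m n : Fin 2) (z : Conf N),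
      (Matrix.reindex (confEquiv (N + 1)) (confEquiv (N + 1))
          ((1 : Matrix (Fin 2) (Fin 2) ℂ) ⊗ₖ Qg Ql (N + 1)))
        (Fin.cons k (Fin.cons l x)) (confEquiv2 N ((m, n), z)) *
      (Matrix.reindex (confEquiv2 N) (confEquiv2 N)
          (Ql ⊗ₖ (1 : Matrix (Conf N) (Conf N) ℂ)))
        (confEquiv2 N ((m, n), z)) (Fin.cons i (Fin.cons j y)) =
      ((if k = m then 1 else 0) * Qg Ql (N + 1) (Fin.cons l x) (Fin.cons n z)) *
        (Ql (m, n) (i, j) * (if z = y then 1 else 0)) := by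
    intro m n z
    have h1 : confEquiv2 N ((m, n), z) = Fin.cons m (Fin.cons n z) := rfl
    rw [h1, Matrix.reindex_apply, Matrix.reindex_apply, Matrix.submatrix_apply,
      Matrix.submatrix_apply, confEquiv_symm_aux, confEquiv_symm_aux, confEquiv2_symm_aux,
      confEquiv2_symm_aux, Matrix.kroneckerMap_apply, Matrix.kroneckerMap_apply,
      Matrix.one_apply, Matrix.one_apply]
  simp only [key]
  simp only [ite_mul, one_mul, zero_mul, mul_ite, mul_zero, mul_one,
    Finset.sum_ite_eq, Finset.sum_ite_eq', Finset.mem_univ, if_true]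
  fin_cases j <;>
    simp [Fin.sum_univ_two, hvan, show (0:Fin 2) ≠ 1 by decide, show (1:Fin 2) ≠ 0 by decide]

/-- `d_N = tr H_N`, with the convention `d_0 = 1`. -/
noncomputable def trD (Ql : Matrix (Fin 2 × Fin 2) (Fin 2 × Fin 2) ℂ) : ℕ → ℂ
  | 0 => 1
  | (N + 1) => Matrix.trace (blockBR (Qg Ql (N + 1)))

lemma trace_split (Ql : Matrix (Fin 2 × Fin 2) (Fin 2 × Fin 2) ℂ)
    (hvan : ∀ i j k l : Fin 2, j ≠ l → Ql (k, l) (i, j) = 0) (N : ℕ) (k : Fin 2) :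
    ∑ w : Conf (N + 1), Qg Ql (N + 2) (Fin.cons k w) (Fin.cons k w) =
      Ql (k, 0) (k, 0) * trE Ql (N + 1) + Ql (k, 1) (k, 1) * trD Ql (N + 1) := by
  rw [← Equiv.sum_comp (confEquiv N), Fintype.sum_prod_type]
  have : ∀ (j : Fin 2) (x : Conf N),
      Qg Ql (N + 2) (Fin.cons k (confEquiv N (j, x))) (Fin.cons k (confEquiv N (j, x))) =
      Qg Ql (N + 1) (Fin.cons j x) (Fin.cons j x) * Ql (k, j) (k, j) := by
    intro j x
    exact Qg_entry Ql hvan N k j k j x x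
  simp only [this, Fin.sum_univ_two]
  simp only [trE, trD, Matrix.trace, Matrix.diag, blockTL, blockBR, Matrix.of_apply,
    ← Finset.sum_mul]
  ring

lemma trE_succ (Ql : Matrix (Fin 2 × Fin 2) (Fin 2 × Fin 2) ℂ)
    (hvan : ∀ i j k l : Fin 2, j ≠ l → Ql (k, l) (i, j) = 0) (N : ℕ) :
    trE Ql (N + 2) =
      Ql (0, 0) (0, 0) * trE Ql (N + 1) + Ql (0, 1) (0, 1) * trD Ql (N + 1) := by
  have h2 : trE Ql (N + 2) =
      ∑ w : Conf (N + 1), Qg Ql (N + 2) (Fin.cons 0 w) (Fin.cons 0 w) := by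
    simp only [trE, Matrix.trace, Matrix.diag, blockTL, Matrix.of_apply]
  rw [h2, trace_split Ql hvan N 0]

lemma trD_succ (Ql : Matrix (Fin 2 × Fin 2) (Fin 2 × Fin 2) ℂ)
    (hvan : ∀ i j k l : Fin 2, j ≠ l → Ql (k, l) (i, j) = 0) (N : ℕ) :
    trD Ql (N + 2) =
      Ql (1, 0) (1, 0) * trE Ql (N + 1) + Ql (1, 1) (1, 1) * trD Ql (N + 1) := by
  have h2 : trD Ql (N + 2) =
      ∑ w : Conf (N + 1), Qg Ql (N + 2) (Fin.cons 1 w) (Fin.cons 1 w) := by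
    simp only [trD, Matrix.trace, Matrix.diag, blockBR, Matrix.of_apply]
  rw [h2, trace_split Ql hvan N 1]

lemma trE_one (Ql : Matrix (Fin 2 × Fin 2) (Fin 2 × Fin 2) ℂ) : trE Ql 1 = 1 := by
  simp only [trE, Matrix.trace]
  simp [Matrix.diag, blockTL, Qg, Matrix.one_apply]

lemma trD_one (Ql : Matrix (Fin 2 × Fin 2) (Fin 2 × Fin 2) ℂ) : trD Ql 1 = 1 := by
  simp only [trD, Matrix.trace]
  simp [Matrix.diag, blockBR, Qg, Matrix.one_apply]

/-- `e_{N+1} = (a₀₀⁰⁰ + a₁₁¹¹) e_N + (a₀₁⁰¹ a₁₀¹⁰ − a₀₀⁰⁰ a₁₁¹¹) e_{N-1}`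
for `N ≥ 2`, with `e_1 = 1` and `e_2 = a₀₀⁰⁰ + a₀₁⁰¹`. -/
theorem stmt6 (Ql : Matrix (Fin 2 × Fin 2) (Fin 2 × Fin 2) ℂ) (hvan : ∀ i j k l : Fin 2, j ≠ l → Ql (k, l) (i, j) = 0) :
    trE Ql 1 = 1 ∧
    trE Ql 2 = Ql (0, 0) (0, 0) + Ql (0, 1) (0, 1) ∧
    ∀ N : ℕ, trE Ql (N + 3) =
      (Ql (0, 0) (0, 0) + Ql (1, 1) (1, 1)) * trE Ql (N + 2) +
      (Ql (0, 1) (0, 1) * Ql (1, 0) (1, 0) - Ql (0, 0) (0, 0) * Ql (1, 1) (1, 1))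
        * trE Ql (N + 1) := by
  refine ⟨trE_one Ql, ?_, ?_⟩
  · have h : trE Ql 2 = Ql (0, 0) (0, 0) * trE Ql 1 + Ql (0, 1) (0, 1) * trD Ql 1 :=
      trE_succ Ql hvan 0
    rw [h, trE_one, trD_one]
    ring
  · intro N
    have h1 : trE Ql (N + 3) =
        Ql (0, 0) (0, 0) * trE Ql (N + 2) + Ql (0, 1) (0, 1) * trD Ql (N + 2) :=
      trE_succ Ql hvan (N + 1)
    have h2 := trD_succ Ql hvan N
    have h3 := trE_succ Ql hvan N
    linear_combination h1 + Ql (0, 1) (0, 1) * h2 - Ql (1, 1) (1, 1) * h3
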